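/- Let n₁ ≤ n₂ be natural numbers, let F be a complex with n₁ nodes, and let F' be the same family of subsets regarded as a complex with n₂ nodes via the inclusion I_{n₁} ⊆ I_{n₂}. Then there is an isomorphism of k-algebras Q(F) ≅ Q(F') (where Q(F) is formed inside Q_{n₁} and Q(F') inside Q_{n₂}) sending the image of u(A) in Q(F) to the image of u(A) in Q(F') for each A ∈ F. -/

import Mathlib

/-- Index type for the generators `z_{A,i}` of `Qₙ`: pairs `(A, i)` with
`A ⊆ Iₙ` and `i ∉ A`. -/
abbrev QIdx (n : ℕ) := {p : Finset (Fin n) × Fin n // p.2 ∉ p.1}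

/-- The defining relations of the algebra `Qₙ`:
additive relations `z_{A∪{i},j} + z_{A,i} = z_{A∪{j},i} + z_{A,j}` and
multiplicative relations `z_{A∪{i},j} · z_{A,i} = z_{A∪{j},i} · z_{A,j}`. -/
inductive QnRel (K : Type*) [Field K] (n : ℕ) :
    FreeAlgebra K (QIdx n) → FreeAlgebra K (QIdx n) → Prop
  | add (A : Finset (Fin n)) (i j : Fin n) (hi : i ∉ A) (hj : j ∉ A) (hij : i ≠ j) :
      QnRel K n
        (FreeAlgebra.ι K (⟨(insert i A, j), by simp [Finset.mem_insert, hij.symm, hj]⟩ : QIdx n)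
          + FreeAlgebra.ι K (⟨(A, i), hi⟩ : QIdx n))
        (FreeAlgebra.ι K (⟨(insert j A, i), by simp [Finset.mem_insert, hij, hi]⟩ : QIdx n)
          + FreeAlgebra.ι K (⟨(A, j), hj⟩ : QIdx n))
  | mul (A : Finset (Fin n)) (i j : Fin n) (hi : i ∉ A) (hj : j ∉ A) (hij : i ≠ j) :
      QnRel K n
        (FreeAlgebra.ι K (⟨(insert i A, j), by simp [Finset.mem_insert, hij.symm, hj]⟩ : QIdx n)
          * FreeAlgebra.ι K (⟨(A, i), hi⟩ : QIdx n))
        (FreeAlgebra.ι K (⟨(insert j A, i), by simp [Finset.mem_insert, hij, hi]⟩ : QIdx n)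
          * FreeAlgebra.ι K (⟨(A, j), hj⟩ : QIdx n))

/-- The algebra `Qₙ`: the quotient of the free associative unital `K`-algebra on the
generators `z_{A,i}` by the two-sided ideal generated by the defining relations. -/
abbrev Qn (K : Type*) [Field K] (n : ℕ) := RingQuot (QnRel K n)

/-- The image `z_{A,i}` of a generator in `Qₙ` (junk value `0` if `i ∈ A`). -/
noncomputable def zQ (K : Type*) [Field K] (n : ℕ) (A : Finset (Fin n)) (i : Fin n) : Qn K n :=
  if h : i ∉ A then RingQuot.mkAlgHom K (QnRel K n) (FreeAlgebra.ι K (⟨(A, i), h⟩ : QIdx n))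
  else 0

/-- The element `u(A) = Σ_{D ⊆ A \ {i}} (−1)^{|A|−|D|} z_{D,i}` for the choice `i = min A`
(for nonempty `A`), with `u(∅) = 1`. -/
noncomputable def uQ (K : Type*) [Field K] (n : ℕ) (A : Finset (Fin n)) : Qn K n :=
  if h : A.Nonempty then
    ∑ D ∈ (A.erase (A.min' h)).powerset,
      (-1 : Qn K n) ^ (A.card - D.card) * zQ K n D (A.min' h)
  else 1

/-- The relations defining `Q(F)`: each `u(A)` with nonempty `A ∉ F` is set to `0`. -/
inductive QcRel (K : Type*) [Field K] (n : ℕ) (F : Set (Finset (Fin n))) :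
    Qn K n → Qn K n → Prop
  | rel (A : Finset (Fin n)) (hA : A.Nonempty) (hAF : A ∉ F) : QcRel K n F (uQ K n A) 0

/-- The algebra `Q(F)`: the quotient of `Qₙ` by the two-sided ideal generated by all
`u(A)` with nonempty `A ∉ F`. -/
abbrev Qc (K : Type*) [Field K] (n : ℕ) (F : Set (Finset (Fin n))) := RingQuot (QcRel K n F)

/-- The image of `u(A)` in `Q(F)`. -/
noncomputable def uc (K : Type*) [Field K] (n : ℕ) (F : Set (Finset (Fin n)))
    (A : Finset (Fin n)) : Qc K n F :=
  RingQuot.mkAlgHom K (QcRel K n F) (uQ K n A)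

-- ## Part A

namespace QP
open Finset RingQuot

variable {K : Type*} [Field K] {n : ℕ}

theorem zQ_eq {A : Finset (Fin n)} {i : Fin n} (h : i ∉ A) :
    zQ K n A i = RingQuot.mkAlgHom K (QnRel K n) (FreeAlgebra.ι K (⟨(A, i), h⟩ : QIdx n)) :=
  dif_pos h

theorem rel_add (A : Finset (Fin n)) (i j : Fin n) (hi : i ∉ A) (hj : j ∉ A) (hij : i ≠ j) :
    zQ K n (insert i A) j + zQ K n A i = zQ K n (insert j A) i + zQ K n A j := by
  have h1 : j ∉ insert i A := by simp [Finset.mem_insert, hij.symm, hj]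
  have h2 : i ∉ insert j A := by simp [Finset.mem_insert, hij, hi]
  rw [zQ_eq h1, zQ_eq hi, zQ_eq h2, zQ_eq hj]
  have := RingQuot.mkAlgHom_rel K (QnRel.add (K := K) (n := n) A i j hi hj hij)
  simpa using this

theorem rel_mul (A : Finset (Fin n)) (i j : Fin n) (hi : i ∉ A) (hj : j ∉ A) (hij : i ≠ j) :
    zQ K n (insert i A) j * zQ K n A i = zQ K n (insert j A) i * zQ K n A j := by
  have h1 : j ∉ insert i A := by simp [Finset.mem_insert, hij.symm, hj]
  have h2 : i ∉ insert j A := by simp [Finset.mem_insert, hij, hi]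
  rw [zQ_eq h1, zQ_eq hi, zQ_eq h2, zQ_eq hj]
  have := RingQuot.mkAlgHom_rel K (QnRel.mul (K := K) (n := n) A i j hi hj hij)
  simpa using this

theorem negpow_succ (k : ℕ) (a : Qn K n) :
    (-1 : Qn K n) ^ (k + 1) * a = -((-1 : Qn K n) ^ k * a) := by
  have h1 : (-1 : Qn K n) * ((-1 : Qn K n) ^ k * a) = -((-1 : Qn K n) ^ k * a) :=
    by exact neg_one_mul ((-1 : Qn K n) ^ k * a)
  rw [pow_succ, ← h1, ← mul_assoc]
  congr 1
  exact ((Commute.refl (-1 : Qn K n)).pow_left k).eq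

/-- `u(A)` computed with an arbitrary choice of `i`. -/
noncomputable def uE (K : Type*) [Field K] {n : ℕ} (A : Finset (Fin n)) (i : Fin n) : Qn K n :=
  ∑ D ∈ (A.erase i).powerset, (-1 : Qn K n) ^ (A.card - D.card) * zQ K n D i

theorem uQ_eq_uE {A : Finset (Fin n)} (h : A.Nonempty) :
    uQ K n A = uE K A (A.min' h) := dif_pos h

theorem uE_eq {A : Finset (Fin n)} {i j : Fin n} (hi : i ∈ A) (hj : j ∈ A) :
    uE K A i = uE K A j := by
  rcases eq_or_ne i j with rfl | hij
  · rfl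
  set s₀ : Finset (Fin n) := (A.erase i).erase j with hs₀
  have hji : j ∈ A.erase i := Finset.mem_erase.2 ⟨hij.symm, hj⟩
  have hij' : i ∈ A.erase j := Finset.mem_erase.2 ⟨hij, hi⟩
  have hjs₀ : j ∉ s₀ := Finset.notMem_erase _ _
  have his₀ : i ∉ s₀ := fun hx => (Finset.notMem_erase i A) (Finset.mem_of_mem_erase hx)
  have hAi : A.erase i = insert j s₀ := (Finset.insert_erase hji).symm
  have hAj : A.erase j = insert i s₀ := by
    rw [hs₀, Finset.erase_right_comm]
    exact (Finset.insert_erase hij').symm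
  have key : ∀ E ∈ s₀.powerset,
      ((-1 : Qn K n) ^ (A.card - E.card) * zQ K n E i
        + (-1 : Qn K n) ^ (A.card - (insert j E).card) * zQ K n (insert j E) i)
      = ((-1 : Qn K n) ^ (A.card - E.card) * zQ K n E j
        + (-1 : Qn K n) ^ (A.card - (insert i E).card) * zQ K n (insert i E) j) := by
    intro E hE
    rw [Finset.mem_powerset] at hE
    have hiE : i ∉ E := fun hx => his₀ (hE hx)
    have hjE : j ∉ E := fun hx => hjs₀ (hE hx)
    have hsub : insert i (insert j E) ⊆ A := by
      intro x hx
      rcases Finset.mem_insert.1 hx with rfl | hx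
      · exact hi
      rcases Finset.mem_insert.1 hx with rfl | hx
      · exact hj
      · exact (Finset.erase_subset _ _) ((Finset.erase_subset _ _) (hE hx))
    have hcard : E.card + 2 ≤ A.card := by
      have := Finset.card_le_card hsub
      rwa [Finset.card_insert_of_notMem (by simp [hiE, Finset.mem_insert, hij]),
        Finset.card_insert_of_notMem hjE] at this
    have hcj : (insert j E).card = E.card + 1 := Finset.card_insert_of_notMem hjE
    have hci : (insert i E).card = E.card + 1 := Finset.card_insert_of_notMem hiE
    obtain ⟨k, hk⟩ : ∃ k, A.card - E.card = k + 1 := ⟨A.card - E.card - 1, by omega⟩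
    have hk' : A.card - (E.card + 1) = k := by omega
    rw [hcj, hci, hk, hk']
    have hrel := rel_add (K := K) E i j hiE hjE hij
    have hthis : zQ K n (insert j E) i - zQ K n E i = zQ K n (insert i E) j - zQ K n E j :=
      sub_eq_sub_iff_add_eq_add.mpr hrel.symm
    have expand : ∀ a b : Qn K n, (-1 : Qn K n) ^ (k + 1) * a + (-1 : Qn K n) ^ k * b
        = (-1 : Qn K n) ^ k * (b - a) := by
      intro a b
      rw [negpow_succ, mul_sub]
      abel
    rw [expand, expand, hthis]
  calc uE K A i = ∑ E ∈ s₀.powerset,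
        ((-1 : Qn K n) ^ (A.card - E.card) * zQ K n E i
          + (-1 : Qn K n) ^ (A.card - (insert j E).card) * zQ K n (insert j E) i) := by
        rw [uE, hAi, Finset.sum_powerset_insert hjs₀, Finset.sum_add_distrib]
    _ = ∑ E ∈ s₀.powerset,
        ((-1 : Qn K n) ^ (A.card - E.card) * zQ K n E j
          + (-1 : Qn K n) ^ (A.card - (insert i E).card) * zQ K n (insert i E) j) :=
        Finset.sum_congr rfl key
    _ = uE K A j := by
        rw [uE, hAj, Finset.sum_powerset_insert his₀, Finset.sum_add_distrib]

theorem uE_eq_uQ {A : Finset (Fin n)} {i : Fin n} (hA : A.Nonempty) (hi : i ∈ A) :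
    uE K A i = uQ K n A := by
  rw [uQ_eq_uE hA, uE_eq hi (A.min'_mem hA)]

theorem sum_pow_neg_one (x : Finset (Fin n)) :
    ∑ S ∈ x.powerset, (-1 : Qn K n) ^ S.card = if x = ∅ then 1 else 0 := by
  induction x using Finset.induction_on with
  | empty => simp
  | insert _ _ ha ih =>
    rename_i a s
    rw [Finset.sum_powerset_insert ha]
    have : ∀ t ∈ s.powerset, (-1 : Qn K n) ^ (insert a t).card = -((-1 : Qn K n) ^ t.card) := by
      intro t ht
      rw [Finset.mem_powerset] at ht
      have hat : a ∉ t := fun hx => ha (ht hx)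
      rw [Finset.card_insert_of_notMem hat]
      have := negpow_succ (K := K) (n := n) t.card 1
      rwa [mul_one, mul_one] at this
    rw [Finset.sum_congr rfl this, Finset.sum_neg_distrib, ih, add_neg_cancel,
      if_neg (Finset.insert_ne_empty a s)]

/-- Möbius inversion: `z_{A,i} = -Σ_{D⊆A} u(D∪{i})` (with the choice `i`). -/
theorem zQ_inv {A : Finset (Fin n)} {i : Fin n} (hi : i ∉ A) :
    zQ K n A i = -∑ D ∈ A.powerset, uE K (insert i D) i := by
  have step : ∀ D ∈ A.powerset,
      -uE K (insert i D) i = ∑ E ∈ D.powerset, (-1 : Qn K n) ^ (D.card - E.card) * zQ K n E i := by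
    intro D hD
    rw [Finset.mem_powerset] at hD
    have hiD : i ∉ D := fun hx => hi (hD hx)
    rw [uE, Finset.erase_insert hiD, Finset.card_insert_of_notMem hiD,
      ← Finset.sum_neg_distrib]
    refine Finset.sum_congr rfl fun E hE => ?_
    rw [Finset.mem_powerset] at hE
    have : D.card + 1 - E.card = (D.card - E.card) + 1 := by
      have := Finset.card_le_card hE; omega
    rw [this, negpow_succ, neg_neg]
  rw [← Finset.sum_neg_distrib, Finset.sum_congr rfl step, Finset.sum_comm'
    (t := fun D => D.powerset) (t' := A.powerset)
    (s' := fun E => A.powerset.filter (fun D => E ⊆ D))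
    (by
      intro D E
      simp only [Finset.mem_powerset, Finset.mem_filter]
      constructor
      · rintro ⟨h1, h2⟩; exact ⟨⟨h1, h2⟩, h2.trans h1⟩
      · rintro ⟨⟨h1, h2⟩, _⟩; exact ⟨h1, h2⟩)]
  have inner : ∀ E ∈ A.powerset,
      ∑ D ∈ A.powerset.filter (fun D => E ⊆ D), (-1 : Qn K n) ^ (D.card - E.card) * zQ K n E i
      = (if E = A then 1 else 0) * zQ K n E i := by
    intro E hE
    rw [Finset.mem_powerset] at hE
    rw [← Finset.sum_mul]
    congr 1
    have reindex : ∑ D ∈ A.powerset.filter (fun D => E ⊆ D), (-1 : Qn K n) ^ (D.card - E.card)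
        = ∑ S ∈ (A \ E).powerset, (-1 : Qn K n) ^ S.card := by
      refine Finset.sum_nbij' (fun D => D \ E) (fun S => E ∪ S) ?_ ?_ ?_ ?_ ?_
      · intro D hD
        simp only [Finset.mem_filter, Finset.mem_powerset] at hD ⊢
        exact Finset.sdiff_subset_sdiff hD.1 Finset.Subset.rfl
      · intro S hS
        simp only [Finset.mem_powerset] at hS
        simp only [Finset.mem_filter, Finset.mem_powerset]
        exact ⟨Finset.union_subset hE (hS.trans (Finset.sdiff_subset)),
          Finset.subset_union_left⟩
      · intro D hD
        simp only [Finset.mem_filter, Finset.mem_powerset] at hD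
        exact Finset.union_sdiff_of_subset hD.2
      · intro S hS
        simp only [Finset.mem_powerset] at hS
        exact Finset.union_sdiff_cancel_left
          ((Finset.disjoint_of_subset_left hS Finset.sdiff_disjoint).symm)
      · intro D hD
        simp only [Finset.mem_filter, Finset.mem_powerset] at hD
        rw [Finset.card_sdiff_of_subset hD.2]
    rw [reindex, sum_pow_neg_one]
    congr 1
    simp only [eq_iff_iff, Finset.sdiff_eq_empty_iff_subset]
    exact ⟨fun h' => Finset.Subset.antisymm hE h', fun h' => h' ▸ Finset.Subset.rfl⟩
  rw [Finset.sum_congr rfl inner]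
  have : ∀ E ∈ A.powerset, (if E = A then (1 : Qn K n) else 0) * zQ K n E i
      = if E = A then zQ K n E i else 0 := by
    intro E _
    split <;> simp
  rw [Finset.sum_congr rfl this, Finset.sum_ite_eq' A.powerset A (fun E => zQ K n E i),
    if_pos (Finset.mem_powerset.2 Finset.Subset.rfl)]
end QP

-- ## Part B : maps between different n

namespace QP
open Finset RingQuot

variable (K : Type*) [Field K] {n₁ n₂ : ℕ} (h : n₁ ≤ n₂)

theorem castLEEmb_coe : ⇑(Fin.castLEEmb h) = Fin.castLE h := rfl

theorem powerset_map {α β : Type*} [DecidableEq α] [DecidableEq β] (f : α ↪ β) (s : Finset α) :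
    (s.map f).powerset = s.powerset.map ⟨Finset.map f, Finset.map_injective f⟩ := by
  ext D
  simp only [Finset.mem_powerset, Finset.mem_map, Function.Embedding.coeFn_mk,
    Finset.subset_map_iff]
  constructor <;> rintro ⟨u, hu, rfl⟩ <;> exact ⟨u, hu, rfl⟩

theorem castLE_monotone : Monotone (Fin.castLE h) := fun _ _ hab => hab

theorem min'_map {A : Finset (Fin n₁)} (hA : A.Nonempty) (hA' : (A.map (Fin.castLEEmb h)).Nonempty) :
    (A.map (Fin.castLEEmb h)).min' hA' = Fin.castLEEmb h (A.min' hA) := by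
  refine le_antisymm (Finset.min'_le _ _ ((Finset.mem_map' _).2 (A.min'_mem hA))) ?_
  refine Finset.le_min' _ _ _ fun y hy => ?_
  obtain ⟨x, hx, rfl⟩ := Finset.mem_map.1 hy
  exact castLE_monotone h (A.min'_le x hx)

noncomputable def φfree : FreeAlgebra K (QIdx n₁) →ₐ[K] Qn K n₂ :=
  FreeAlgebra.lift K fun p : QIdx n₁ =>
    zQ K n₂ (p.1.1.map (Fin.castLEEmb h)) (Fin.castLEEmb h p.1.2)

theorem φfree_ι (p : QIdx n₁) :
    φfree K h (FreeAlgebra.ι K p)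
      = zQ K n₂ (p.1.1.map (Fin.castLEEmb h)) (Fin.castLEEmb h p.1.2) := by
  rw [φfree, FreeAlgebra.lift_ι_apply]

theorem φrel : ∀ ⦃x y : FreeAlgebra K (QIdx n₁)⦄, QnRel K n₁ x y → φfree K h x = φfree K h y := by
  intro x y r
  cases r with
  | add A i j hi hj hij =>
    rw [map_add, map_add, φfree_ι, φfree_ι, φfree_ι, φfree_ι]
    simp only [Finset.map_insert]
    exact rel_add (K := K) _ _ _ (fun hx => hi ((Finset.mem_map' _).1 hx))
      (fun hx => hj ((Finset.mem_map' _).1 hx))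
      (fun he => hij ((Fin.castLEEmb h).injective he))
  | mul A i j hi hj hij =>
    rw [map_mul, map_mul, φfree_ι, φfree_ι, φfree_ι, φfree_ι]
    simp only [Finset.map_insert]
    exact rel_mul (K := K) _ _ _ (fun hx => hi ((Finset.mem_map' _).1 hx))
      (fun hx => hj ((Finset.mem_map' _).1 hx))
      (fun he => hij ((Fin.castLEEmb h).injective he))

noncomputable def φ0 : Qn K n₁ →ₐ[K] Qn K n₂ :=
  RingQuot.liftAlgHom K ⟨φfree K h, φrel K h⟩

theorem φ0_mk (x : FreeAlgebra K (QIdx n₁)) :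
    φ0 K h (RingQuot.mkAlgHom K (QnRel K n₁) x) = φfree K h x := by
  rw [φ0, RingQuot.liftAlgHom_mkAlgHom_apply]

theorem φ0_z {A : Finset (Fin n₁)} {i : Fin n₁} (hi : i ∉ A) :
    φ0 K h (zQ K n₁ A i)
      = zQ K n₂ (A.map (Fin.castLEEmb h)) (Fin.castLEEmb h i) := by
  rw [zQ_eq hi, φ0_mk, φfree_ι]

theorem φ0_uE (A : Finset (Fin n₁)) (i : Fin n₁) :
    φ0 K h (uE K A i) = uE K (A.map (Fin.castLEEmb h)) (Fin.castLEEmb h i) := by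
  rw [uE, uE, map_sum, ← Finset.map_erase, powerset_map,
    Finset.sum_map _ ⟨Finset.map (Fin.castLEEmb h), _⟩]
  refine Finset.sum_congr rfl fun D hD => ?_
  rw [Finset.mem_powerset] at hD
  have hiD : i ∉ D := fun hx => Finset.notMem_erase i A (hD hx)
  rw [map_mul, map_pow, map_neg, map_one, φ0_z K h hiD]
  simp only [Function.Embedding.coeFn_mk, Finset.card_map]

theorem φ0_u (A : Finset (Fin n₁)) :
    φ0 K h (uQ K n₁ A) = uQ K n₂ (A.map (Fin.castLEEmb h)) := by
  by_cases hA : A.Nonempty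
  · have hA' : (A.map (Fin.castLEEmb h)).Nonempty := hA.map
    rw [uQ_eq_uE hA, uQ_eq_uE hA', min'_map h hA, φ0_uE]
  · rw [Finset.not_nonempty_iff_eq_empty] at hA
    subst hA
    rw [Finset.map_empty]
    rw [show uQ K n₁ ∅ = 1 from dif_neg (by simp),
      show uQ K n₂ ∅ = 1 from dif_neg (by simp), map_one]

variable (F : Set (Finset (Fin n₁)))

theorem uc_zero {n : ℕ} (G : Set (Finset (Fin n))) {A : Finset (Fin n)} (hA : A.Nonempty)
    (hAF : A ∉ G) : RingQuot.mkAlgHom K (QcRel K n G) (uQ K n A) = 0 := by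
  have := RingQuot.mkAlgHom_rel K (QcRel.rel (K := K) (n := n) (F := G) A hA hAF)
  simpa using this

noncomputable def Φ : Qc K n₁ F →ₐ[K] Qc K n₂ (Finset.map (Fin.castLEEmb h) '' F) :=
  RingQuot.liftAlgHom K ⟨(RingQuot.mkAlgHom K (QcRel K n₂ (Finset.map (Fin.castLEEmb h) '' F))).comp (φ0 K h), by
    intro x y r
    cases r with
    | rel A hA hAF =>
      simp only [AlgHom.comp_apply, map_zero]
      rw [φ0_u]
      refine uc_zero K _ (hA.map) ?_
      rintro ⟨B, hBF, hBeq⟩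
      exact hAF (Finset.map_injective _ hBeq ▸ hBF)⟩

theorem Φ_mk (x : Qn K n₁) :
    Φ K h F (RingQuot.mkAlgHom K (QcRel K n₁ F) x)
      = RingQuot.mkAlgHom K (QcRel K n₂ (Finset.map (Fin.castLEEmb h) '' F)) (φ0 K h x) := by
  rw [Φ, RingQuot.liftAlgHom_mkAlgHom_apply]; rfl

end QP

namespace QP
open Finset RingQuot

variable (K : Type*) [Field K] {n₁ n₂ : ℕ} (h : n₁ ≤ n₂)

/-- restriction of a subset of `I_{n₂}` to `I_{n₁}` -/
noncomputable def res (B : Finset (Fin n₂)) : Finset (Fin n₁) :=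
  B.preimage (Fin.castLE h) ((Fin.castLE_injective h).injOn)

theorem mem_res {B : Finset (Fin n₂)} {i : Fin n₁} :
    i ∈ res h B ↔ Fin.castLE h i ∈ B := Finset.mem_preimage

theorem res_map (A : Finset (Fin n₁)) : res h (A.map (Fin.castLEEmb h)) = A := by
  ext i
  rw [mem_res]
  exact Finset.mem_map' (Fin.castLEEmb h)

theorem map_res_subset (B : Finset (Fin n₂)) : (res h B).map (Fin.castLEEmb h) ⊆ B := by
  intro x hx
  obtain ⟨y, hy, rfl⟩ := Finset.mem_map.1 hx
  exact mem_res h |>.1 hy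

theorem res_insert_lt {B : Finset (Fin n₂)} {t : Fin n₂} (ht : (t : ℕ) < n₁) :
    res h (insert t B) = insert (⟨(t : ℕ), ht⟩ : Fin n₁) (res h B) := by
  ext i
  simp only [mem_res, Finset.mem_insert]
  constructor
  · rintro (he | hi)
    · have hv : (i : ℕ) = (t : ℕ) := congrArg Fin.val he
      exact Or.inl (Fin.val_injective hv)
    · exact Or.inr hi
  · rintro (rfl | hi)
    · exact Or.inl rfl
    · exact Or.inr hi

theorem res_insert_ge {B : Finset (Fin n₂)} {t : Fin n₂} (ht : ¬ (t : ℕ) < n₁) :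
    res h (insert t B) = res h B := by
  ext i
  simp only [mem_res, Finset.mem_insert]
  constructor
  · rintro (he | hi)
    · exact absurd (show (t : ℕ) < n₁ by rw [← he]; exact i.isLt) ht
    · exact hi
  · exact fun hi => Or.inr hi

/-- The value assigned to the generator `z_{B,j}` of `Q_{n₂}` in `Q(F)`. -/
noncomputable def vz (F : Set (Finset (Fin n₁))) (B : Finset (Fin n₂)) (j : Fin n₂) :
    Qc K n₁ F :=
  if hlt : (j : ℕ) < n₁ then
    RingQuot.mkAlgHom K (QcRel K n₁ F) (zQ K n₁ (res h B) ⟨(j : ℕ), hlt⟩)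
  else 0

variable (F : Set (Finset (Fin n₁)))

theorem vz_add (B : Finset (Fin n₂)) (i j : Fin n₂) (hi : i ∉ B) (hj : j ∉ B) (hij : i ≠ j) :
    vz K h F (insert i B) j + vz K h F B i = vz K h F (insert j B) i + vz K h F B j := by
  by_cases hil : (i : ℕ) < n₁ <;> by_cases hjl : (j : ℕ) < n₁
  · set i' : Fin n₁ := ⟨(i : ℕ), hil⟩
    set j' : Fin n₁ := ⟨(j : ℕ), hjl⟩
    have hi' : i' ∉ res h B := fun hx => hi (mem_res h |>.1 hx)
    have hj' : j' ∉ res h B := fun hx => hj (mem_res h |>.1 hx)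
    have hij' : i' ≠ j' := fun he => hij (by
      have := congrArg Fin.val he
      exact Fin.ext this)
    rw [vz, vz, vz, vz, dif_pos hil, dif_pos hjl, dif_pos hil, dif_pos hjl,
      res_insert_lt h hil, res_insert_lt h hjl]
    have := congrArg (RingQuot.mkAlgHom K (QcRel K n₁ F)) (rel_add (res h B) i' j' hi' hj' hij')
    simpa using this
  · rw [vz, vz, vz, vz, dif_neg hjl, dif_pos hil, dif_pos hil, dif_neg hjl,
      res_insert_ge h hjl]
    abel
  · rw [vz, vz, vz, vz, dif_pos hjl, dif_neg hil, dif_neg hil, dif_pos hjl,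
      res_insert_ge h hil]
    abel
  · rw [vz, vz, vz, vz, dif_neg hjl, dif_neg hil, dif_neg hil, dif_neg hjl]

theorem vz_mul (B : Finset (Fin n₂)) (i j : Fin n₂) (hi : i ∉ B) (hj : j ∉ B) (hij : i ≠ j) :
    vz K h F (insert i B) j * vz K h F B i = vz K h F (insert j B) i * vz K h F B j := by
  by_cases hil : (i : ℕ) < n₁ <;> by_cases hjl : (j : ℕ) < n₁
  · set i' : Fin n₁ := ⟨(i : ℕ), hil⟩
    set j' : Fin n₁ := ⟨(j : ℕ), hjl⟩
    have hi' : i' ∉ res h B := fun hx => hi (mem_res h |>.1 hx)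
    have hj' : j' ∉ res h B := fun hx => hj (mem_res h |>.1 hx)
    have hij' : i' ≠ j' := fun he => hij (by
      have := congrArg Fin.val he
      exact Fin.ext this)
    rw [vz, vz, vz, vz, dif_pos hil, dif_pos hjl, dif_pos hil, dif_pos hjl,
      res_insert_lt h hil, res_insert_lt h hjl]
    have := congrArg (RingQuot.mkAlgHom K (QcRel K n₁ F)) (rel_mul (res h B) i' j' hi' hj' hij')
    simpa using this
  · rw [vz, vz, vz, vz, dif_neg hjl, dif_pos hil, dif_pos hil, dif_neg hjl]
    simp
  · rw [vz, vz, vz, vz, dif_pos hjl, dif_neg hil, dif_neg hil, dif_pos hjl]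
    simp
  · rw [vz, vz, vz, vz, dif_neg hjl, dif_neg hil, dif_neg hil, dif_neg hjl]

noncomputable def ψfree : FreeAlgebra K (QIdx n₂) →ₐ[K] Qc K n₁ F :=
  FreeAlgebra.lift K fun p : QIdx n₂ => vz K h F p.1.1 p.1.2

theorem ψfree_ι (p : QIdx n₂) :
    ψfree K h F (FreeAlgebra.ι K p) = vz K h F p.1.1 p.1.2 := by
  rw [ψfree, FreeAlgebra.lift_ι_apply]

theorem ψrel : ∀ ⦃x y : FreeAlgebra K (QIdx n₂)⦄, QnRel K n₂ x y →
    ψfree K h F x = ψfree K h F y := by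
  intro x y r
  cases r with
  | add A i j hi hj hij =>
    rw [map_add, map_add, ψfree_ι, ψfree_ι, ψfree_ι, ψfree_ι]
    exact vz_add K h F A i j hi hj hij
  | mul A i j hi hj hij =>
    rw [map_mul, map_mul, ψfree_ι, ψfree_ι, ψfree_ι, ψfree_ι]
    exact vz_mul K h F A i j hi hj hij

noncomputable def ψ0 : Qn K n₂ →ₐ[K] Qc K n₁ F :=
  RingQuot.liftAlgHom K ⟨ψfree K h F, ψrel K h F⟩

theorem ψ0_mk (x : FreeAlgebra K (QIdx n₂)) :
    ψ0 K h F (RingQuot.mkAlgHom K (QnRel K n₂) x) = ψfree K h F x := by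
  rw [ψ0, RingQuot.liftAlgHom_mkAlgHom_apply]

theorem ψ0_z {B : Finset (Fin n₂)} {j : Fin n₂} (hj : j ∉ B) :
    ψ0 K h F (zQ K n₂ B j) = vz K h F B j := by
  rw [zQ_eq hj, ψ0_mk, ψfree_ι]

theorem ψφ : (ψ0 K h F).comp (φ0 K h) = RingQuot.mkAlgHom K (QcRel K n₁ F) := by
  refine RingQuot.ringQuot_ext' K _ _ (FreeAlgebra.hom_ext ?_)
  funext p
  obtain ⟨⟨A, i⟩, hi⟩ := p
  simp only [Function.comp_apply, AlgHom.coe_comp]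
  rw [φ0_mk, φfree_ι]
  dsimp only
  have hlt : ((Fin.castLEEmb h i : Fin n₂) : ℕ) < n₁ := i.isLt
  have hmem : Fin.castLEEmb h i ∉ A.map (Fin.castLEEmb h) :=
    fun hx => hi ((Finset.mem_map' _).1 hx)
  rw [ψ0_z K h F hmem, vz, dif_pos hlt, res_map, ← zQ_eq hi]
  rfl

end QP

namespace QP
open Finset RingQuot

variable (K : Type*) [Field K] {n₁ n₂ : ℕ} (h : n₁ ≤ n₂) (F : Set (Finset (Fin n₁)))

instance qcHasDistribNeg {n : ℕ} (G : Set (Finset (Fin n))) : HasDistribNeg (Qc K n G) :=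
  @NonUnitalNonAssocRing.toHasDistribNeg (Qc K n G) _

theorem negpow_succ_c {n : ℕ} (G : Set (Finset (Fin n))) (k : ℕ) (a : Qc K n G) :
    (-1 : Qc K n G) ^ (k + 1) * a = -((-1 : Qc K n G) ^ k * a) := by
  have h1 : (-1 : Qc K n G) * ((-1 : Qc K n G) ^ k * a) = -((-1 : Qc K n G) ^ k * a) := by
    exact neg_one_mul ((-1 : Qc K n G) ^ k * a)
  rw [pow_succ, ← h1, ← mul_assoc]
  congr 1
  exact ((Commute.refl (-1 : Qc K n G)).pow_left k).eq

theorem map_res_eq {B : Finset (Fin n₂)} (hall : ∀ x ∈ B, (x : ℕ) < n₁) :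
    (res h B).map (Fin.castLEEmb h) = B := by
  refine Finset.Subset.antisymm (map_res_subset h B) fun x hx => ?_
  refine Finset.mem_map.2 ⟨⟨(x : ℕ), hall x hx⟩, ?_, rfl⟩
  exact (mem_res h).2 hx

theorem mem_F'_lt {C : Finset (Fin n₂)} (hC : C ∈ Finset.map (Fin.castLEEmb h) '' F)
    {x : Fin n₂} (hx : x ∈ C) : (x : ℕ) < n₁ := by
  obtain ⟨C₀, _, rfl⟩ := hC
  obtain ⟨y, _, rfl⟩ := Finset.mem_map.1 hx
  exact y.isLt

theorem ψ0_u (B : Finset (Fin n₂)) (hB : B.Nonempty)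
    (hBF : B ∉ Finset.map (Fin.castLEEmb h) '' F) : ψ0 K h F (uQ K n₂ B) = 0 := by
  by_cases hall : ∀ x ∈ B, (x : ℕ) < n₁
  · have h1 : uQ K n₂ B = φ0 K h (uQ K n₁ (res h B)) := by
      rw [φ0_u, map_res_eq h hall]
    rw [h1, ← AlgHom.comp_apply, ψφ]
    obtain ⟨x, hx⟩ := hB
    refine uc_zero K F ⟨⟨(x : ℕ), hall x hx⟩, (mem_res h).2 hx⟩ fun hmem => ?_
    exact hBF ⟨res h B, hmem, map_res_eq h hall⟩
  · push_neg at hall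
    obtain ⟨t, htB, htge⟩ := hall
    have htge' : ¬ (t : ℕ) < n₁ := not_lt.2 htge
    rw [uQ_eq_uE hB, uE, map_sum]
    set m := B.min' hB with hm
    by_cases hml : (m : ℕ) < n₁
    · have htm : t ≠ m := fun he => htge' (he ▸ hml)
      have ht' : t ∈ B.erase m := Finset.mem_erase.2 ⟨htm, htB⟩
      have hterm : ∀ D ∈ (B.erase m).powerset,
          ψ0 K h F ((-1 : Qn K n₂) ^ (B.card - D.card) * zQ K n₂ D m)
          = (-1 : Qc K n₁ F) ^ (B.card - D.card)
              * RingQuot.mkAlgHom K (QcRel K n₁ F) (zQ K n₁ (res h D) ⟨(m : ℕ), hml⟩) := by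
        intro D hD
        rw [Finset.mem_powerset] at hD
        have hmD : m ∉ D := fun hx => Finset.notMem_erase m B (hD hx)
        rw [map_mul, map_pow, map_neg, map_one, ψ0_z K h F hmD, vz, dif_pos hml]
      rw [Finset.sum_congr rfl hterm]
      have pair_key : ∀ D₀ ⊆ B.erase m, t ∉ D₀ →
          ((-1 : Qc K n₁ F) ^ (B.card - D₀.card)
            * RingQuot.mkAlgHom K (QcRel K n₁ F) (zQ K n₁ (res h D₀) ⟨(m : ℕ), hml⟩))
          + ((-1 : Qc K n₁ F) ^ (B.card - (insert t D₀).card)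
            * RingQuot.mkAlgHom K (QcRel K n₁ F)
                (zQ K n₁ (res h (insert t D₀)) ⟨(m : ℕ), hml⟩)) = 0 := by
        intro D₀ hD₀ htD₀
        rw [res_insert_ge h htge', Finset.card_insert_of_notMem htD₀]
        have hsub : insert t D₀ ⊆ B.erase m := Finset.insert_subset ht' hD₀
        have hcle : D₀.card + 1 ≤ B.card := by
          have h1 := Finset.card_le_card hsub
          have h2 : (B.erase m).card = B.card - 1 := by
            rw [hm]
            exact Finset.card_erase_of_mem (B.min'_mem hB)
          have h3 : 1 ≤ B.card := Finset.card_pos.2 hB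
          rw [Finset.card_insert_of_notMem htD₀] at h1
          omega
        have hk : B.card - D₀.card = (B.card - (D₀.card + 1)) + 1 := by omega
        rw [hk, negpow_succ_c]
        exact neg_add_cancel ((-1 : Qc K n₁ F) ^ (B.card - (D₀.card + 1))
          * RingQuot.mkAlgHom K (QcRel K n₁ F) (zQ K n₁ (res h D₀) ⟨(m : ℕ), hml⟩))
      refine Finset.sum_involution
        (fun D _ => if t ∈ D then D.erase t else insert t D) ?_ ?_ ?_ ?_
      · intro D hD
        rw [Finset.mem_powerset] at hD
        by_cases htD : t ∈ D
        · simp only [if_pos htD]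
          have h0 : t ∉ D.erase t := Finset.notMem_erase t D
          have hDsub : D.erase t ⊆ B.erase m := (Finset.erase_subset t D).trans hD
          have := pair_key (D.erase t) hDsub h0
          rw [Finset.insert_erase htD] at this
          rw [add_comm]
          exact this
        · simp only [if_neg htD]
          exact pair_key D hD htD
      · intro D _ _
        by_cases htD : t ∈ D
        · simp only [if_pos htD]
          intro he
          exact (Finset.notMem_erase t D) (he.symm ▸ htD)
        · simp only [if_neg htD]
          intro he
          exact htD (he ▸ Finset.mem_insert_self t D)
      · intro D hD
        rw [Finset.mem_powerset] at hD ⊢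
        by_cases htD : t ∈ D
        · simp only [if_pos htD]
          exact (Finset.erase_subset t D).trans hD
        · simp only [if_neg htD]
          exact Finset.insert_subset ht' hD
      · intro D _
        by_cases htD : t ∈ D
        · simp only [if_pos htD, if_neg (Finset.notMem_erase t D)]
          exact Finset.insert_erase htD
        · simp only [if_neg htD, if_pos (Finset.mem_insert_self t D)]
          exact Finset.erase_insert htD
    · have hterm : ∀ D ∈ (B.erase m).powerset,
          ψ0 K h F ((-1 : Qn K n₂) ^ (B.card - D.card) * zQ K n₂ D m) = 0 := by
        intro D hD
        rw [Finset.mem_powerset] at hD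
        have hmD : m ∉ D := fun hx => Finset.notMem_erase m B (hD hx)
        rw [map_mul, ψ0_z K h F hmD, vz, dif_neg hml, mul_zero]
      rw [Finset.sum_congr rfl hterm, Finset.sum_const_zero]

noncomputable def Ψ : Qc K n₂ (Finset.map (Fin.castLEEmb h) '' F) →ₐ[K] Qc K n₁ F :=
  RingQuot.liftAlgHom K ⟨ψ0 K h F, by
    intro x y r
    cases r with
    | rel A hA hAF => rw [map_zero, ψ0_u K h F A hA hAF]⟩

theorem Ψ_mk (x : Qn K n₂) :
    Ψ K h F (RingQuot.mkAlgHom K (QcRel K n₂ (Finset.map (Fin.castLEEmb h) '' F)) x)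
      = ψ0 K h F x := by
  rw [Ψ, RingQuot.liftAlgHom_mkAlgHom_apply]

open Classical in
theorem zc_eq {B : Finset (Fin n₂)} {j : Fin n₂} (hj : j ∉ B) :
    RingQuot.mkAlgHom K (QcRel K n₂ (Finset.map (Fin.castLEEmb h) '' F)) (zQ K n₂ B j)
    = -∑ D ∈ B.powerset.filter (fun D => insert j D ∈ Finset.map (Fin.castLEEmb h) '' F),
        RingQuot.mkAlgHom K (QcRel K n₂ (Finset.map (Fin.castLEEmb h) '' F))
          (uQ K n₂ (insert j D)) := by
  rw [zQ_inv hj, map_neg, map_sum]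
  congr 1
  have hstep : ∀ D ∈ B.powerset,
      RingQuot.mkAlgHom K (QcRel K n₂ (Finset.map (Fin.castLEEmb h) '' F))
        (uE K (insert j D) j)
      = RingQuot.mkAlgHom K (QcRel K n₂ (Finset.map (Fin.castLEEmb h) '' F))
        (uQ K n₂ (insert j D)) := by
    intro D _
    rw [uE_eq_uQ (Finset.insert_nonempty j D) (Finset.mem_insert_self j D)]
  rw [Finset.sum_congr rfl hstep]
  refine (Finset.sum_filter_of_ne ?_).symm
  intro D _ hne
  by_contra hnotin
  exact hne (uc_zero K _ (Finset.insert_nonempty j D) hnotin)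

open Classical in
theorem Φψ_gen {B : Finset (Fin n₂)} {j : Fin n₂} (hj : j ∉ B) :
    Φ K h F (ψ0 K h F (zQ K n₂ B j))
      = RingQuot.mkAlgHom K (QcRel K n₂ (Finset.map (Fin.castLEEmb h) '' F)) (zQ K n₂ B j) := by
  rw [ψ0_z K h F hj, vz]
  by_cases hlt : (j : ℕ) < n₁
  · have hj' : (⟨(j : ℕ), hlt⟩ : Fin n₁) ∉ res h B := fun hx => hj ((mem_res h).1 hx)
    rw [dif_pos hlt, Φ_mk, φ0_z K h hj']
    have hcast : (Fin.castLEEmb h (⟨(j : ℕ), hlt⟩ : Fin n₁) : Fin n₂) = j := rfl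
    rw [hcast]
    have hjB₀ : j ∉ (res h B).map (Fin.castLEEmb h) := fun hx => hj (map_res_subset h B hx)
    rw [zc_eq K h F hjB₀, zc_eq K h F hj]
    have hsets : ((res h B).map (Fin.castLEEmb h)).powerset.filter
          (fun D => insert j D ∈ Finset.map (Fin.castLEEmb h) '' F)
        = B.powerset.filter (fun D => insert j D ∈ Finset.map (Fin.castLEEmb h) '' F) := by
      ext D
      simp only [Finset.mem_filter, Finset.mem_powerset]
      constructor
      · rintro ⟨hDB₀, hins⟩
        exact ⟨hDB₀.trans (map_res_subset h B), hins⟩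
      · rintro ⟨hDB, hins⟩
        refine ⟨fun x hxD => ?_, hins⟩
        have hxlt : (x : ℕ) < n₁ := mem_F'_lt h F hins (Finset.mem_insert_of_mem hxD)
        exact Finset.mem_map.2 ⟨⟨(x : ℕ), hxlt⟩, (mem_res h).2 (hDB hxD), rfl⟩
    rw [hsets]
  · rw [dif_neg hlt, map_zero, zc_eq K h F hj]
    have hempty : B.powerset.filter
        (fun D => insert j D ∈ Finset.map (Fin.castLEEmb h) '' F) = ∅ := by
      refine Finset.filter_eq_empty_iff.2 ?_
      intro D _ hins
      exact hlt (mem_F'_lt h F hins (Finset.mem_insert_self j D))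
    rw [hempty, Finset.sum_empty, neg_zero]

theorem ΨΦ_id : (Ψ K h F).comp (Φ K h F) = AlgHom.id K (Qc K n₁ F) := by
  refine RingQuot.ringQuot_ext' K _ _ ?_
  refine AlgHom.ext fun x => ?_
  simp only [AlgHom.coe_comp, Function.comp_apply, AlgHom.id_apply]
  rw [Φ_mk, Ψ_mk]
  exact DFunLike.congr_fun (ψφ K h F) x

theorem ΦΨ_id : (Φ K h F).comp (Ψ K h F)
    = AlgHom.id K (Qc K n₂ (Finset.map (Fin.castLEEmb h) '' F)) := by
  refine RingQuot.ringQuot_ext' K _ _ ?_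
  refine RingQuot.ringQuot_ext' K _ _ ?_
  refine FreeAlgebra.hom_ext ?_
  funext p
  obtain ⟨⟨B, j⟩, hj⟩ := p
  simp only [Function.comp_apply, AlgHom.coe_comp, AlgHom.id_apply]
  rw [← zQ_eq hj, Ψ_mk]
  exact Φψ_gen K h F hj

end QP


/-- Let `n₁ ≤ n₂`, let `F` be a complex with `n₁` nodes, and let `F'` be the same family
regarded as a complex with `n₂` nodes via the inclusion `I_{n₁} ⊆ I_{n₂}`. Then there is
a `K`-algebra isomorphism `Q(F) ≅ Q(F')` sending the image of `u(A)` in `Q(F)` to the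
image of `u(A)` in `Q(F')` for each `A ∈ F`. -/
theorem complex_iso_of_le (K : Type*) [Field K] (n₁ n₂ : ℕ) (h : n₁ ≤ n₂)
    (F : Set (Finset (Fin n₁)))
    (hFne : ∀ A ∈ F, A.Nonempty)
    (hFsing : ∀ i : Fin n₁, ({i} : Finset (Fin n₁)) ∈ F)
    (hFdown : ∀ A ∈ F, ∀ B ⊆ A, B.Nonempty → B ∈ F) :
    ∃ e : Qc K n₁ F ≃ₐ[K]
        Qc K n₂ (Finset.map (Fin.castLEEmb h) '' F),
      ∀ A ∈ F,
        e (uc K n₁ F A) =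
          uc K n₂ (Finset.map (Fin.castLEEmb h) '' F)
            (A.map (Fin.castLEEmb h)) := by
  refine ⟨AlgEquiv.ofAlgHom (QP.Φ K h F) (QP.Ψ K h F) (QP.ΦΨ_id K h F) (QP.ΨΦ_id K h F),
    fun A _ => ?_⟩
  show QP.Φ K h F (uc K n₁ F A)
    = uc K n₂ (Finset.map (Fin.castLEEmb h) '' F) (A.map (Fin.castLEEmb h))
  simp only [uc]
  rw [QP.Φ_mk K h F, QP.φ0_u K h]
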